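/- For the HREM, the quenched free energy sequence is non-decreasing in system size: f_{k+1} ≥ f_k for all k ≥ 0 and all β ≥ 0. -/

import Mathlib

open MeasureTheory ProbabilityTheory Real Filter

/-- A configuration of `2 ^ n` Ising spins (each spin is a Boolean). -/
abbrev Cfg (n : ℕ) : Type := Fin (2 ^ n) → Bool

/-- The left half of a spin configuration. -/
def blkL {n : ℕ} (S : Cfg (n + 1)) : Cfg n :=
  fun i => S ⟨i.1, lt_of_lt_of_le i.2 (Nat.pow_le_pow_right (by norm_num) (Nat.le_succ n))⟩

/-- The right half of a spin configuration. -/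
def blkR {n : ℕ} (S : Cfg (n + 1)) : Cfg n :=
  fun i => S ⟨2 ^ n + i.1, by have := i.2; rw [pow_succ]; omega⟩

variable {Ω : Type} [MeasurableSpace Ω]

/-- The Hamiltonian of the hierarchical random energy model (HREM), defined recursively:
`H_{n+1}[S] = H_n¹[S₁] + H_n²[S₂] + 2^{(n+1)(1-σ)/2} ε_{n+1}[S]`, `H_0[S] = ε_0[S]`,
where the second argument indexes the hierarchical block (the two sub-blocks of block `j`
are `2j` and `2j+1`), so that the two half-Hamiltonians use disjoint (hence independent)
families of random energies. -/
noncomputable def hremH (σ : ℝ) (ε : ∀ l : ℕ, ℕ → Cfg l → Ω → ℝ) :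
    ∀ n : ℕ, ℕ → Cfg n → Ω → ℝ
  | 0 => fun j S => ε 0 j S
  | (n + 1) => fun j S ω =>
      hremH σ ε n (2 * j) (blkL S) ω + hremH σ ε n (2 * j + 1) (blkR S) ω
        + (2 : ℝ) ^ (((n : ℝ) + 1) * (1 - σ) / 2) * ε (n + 1) j S ω

/-- The partition function `Z_n = ∑_S exp (-β H_n[S])` of the HREM. -/
noncomputable def hremZ (σ : ℝ) (ε : ∀ l : ℕ, ℕ → Cfg l → Ω → ℝ) (β : ℝ) (n : ℕ)
    (ω : Ω) : ℝ :=
  ∑ S : Cfg n, Real.exp (-β * hremH σ ε n 0 S ω)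

/-- The quenched free energy `f_n = 2^{-n} E[log Z_n]` of the HREM. -/
noncomputable def hremF (σ : ℝ) (ε : ∀ l : ℕ, ℕ → Cfg l → Ω → ℝ) (μ : Measure Ω)
    (β : ℝ) (n : ℕ) : ℝ :=
  ((2 : ℝ) ^ n)⁻¹ * ∫ ω, Real.log (hremZ σ ε β n ω) ∂μ

/-- Master congruence lemma: `hremH` at block `j₁` only depends on the energies in the
subtree of block `j₁`, and relabeling that subtree onto the subtree of `j₂` preserves it. -/
lemma hremH_congr {Ω₁ Ω₂ : Type} [MeasurableSpace Ω₁] [MeasurableSpace Ω₂] (σ : ℝ)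
    (ε₁ : ∀ l : ℕ, ℕ → Cfg l → Ω₁ → ℝ) (ε₂ : ∀ l : ℕ, ℕ → Cfg l → Ω₂ → ℝ) :
    ∀ (n j₁ j₂ : ℕ) (ω₁ : Ω₁) (ω₂ : Ω₂),
      (∀ l, l ≤ n → ∀ j', j' < 2 ^ (n - l) → ∀ c : Cfg l,
        ε₁ l (j₁ * 2 ^ (n - l) + j') c ω₁ = ε₂ l (j₂ * 2 ^ (n - l) + j') c ω₂) →
      ∀ S : Cfg n, hremH σ ε₁ n j₁ S ω₁ = hremH σ ε₂ n j₂ S ω₂ := by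
  intro n
  induction n with
  | zero =>
    intro j₁ j₂ ω₁ ω₂ h S
    have := h 0 le_rfl 0 (by norm_num) S
    simpa [hremH] using this
  | succ n ih =>
    intro j₁ j₂ ω₁ ω₂ h S
    have hL : hremH σ ε₁ n (2 * j₁) (blkL S) ω₁ = hremH σ ε₂ n (2 * j₂) (blkL S) ω₂ := by
      refine ih (2 * j₁) (2 * j₂) ω₁ ω₂ ?_ (blkL S)
      intro l hl j' hj' c
      have h2 : n + 1 - l = (n - l) + 1 := by omega
      have hpow : 2 ^ (n + 1 - l) = 2 * 2 ^ (n - l) := by rw [h2, pow_succ]; ring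
      have := h l (by omega) j' (by omega) c
      rw [hpow] at this
      have e1 : 2 * j₁ * 2 ^ (n - l) + j' = j₁ * (2 * 2 ^ (n - l)) + j' := by ring
      have e2 : 2 * j₂ * 2 ^ (n - l) + j' = j₂ * (2 * 2 ^ (n - l)) + j' := by ring
      rw [e1, e2]
      exact this
    have hR : hremH σ ε₁ n (2 * j₁ + 1) (blkR S) ω₁
        = hremH σ ε₂ n (2 * j₂ + 1) (blkR S) ω₂ := by
      refine ih (2 * j₁ + 1) (2 * j₂ + 1) ω₁ ω₂ ?_ (blkR S)
      intro l hl j' hj' c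
      have h2 : n + 1 - l = (n - l) + 1 := by omega
      have hpow : 2 ^ (n + 1 - l) = 2 * 2 ^ (n - l) := by rw [h2, pow_succ]; ring
      have := h l (by omega) (2 ^ (n - l) + j') (by omega) c
      rw [hpow] at this
      have e1 : (2 * j₁ + 1) * 2 ^ (n - l) + j' = j₁ * (2 * 2 ^ (n - l)) + (2 ^ (n - l) + j') := by
        ring
      have e2 : (2 * j₂ + 1) * 2 ^ (n - l) + j' = j₂ * (2 * 2 ^ (n - l)) + (2 ^ (n - l) + j') := by
        ring
      rw [e1, e2]
      exact this
    have hT : ε₁ (n + 1) j₁ S ω₁ = ε₂ (n + 1) j₂ S ω₂ := by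
      have := h (n + 1) le_rfl 0 (by norm_num) S
      simpa using this
    simp only [hremH, hL, hR, hT]

lemma hremH_measurable {X : Type} [MeasurableSpace X] (σ : ℝ)
    (ε : ∀ l : ℕ, ℕ → Cfg l → X → ℝ) (h : ∀ l j c, Measurable (ε l j c)) :
    ∀ n j S, Measurable (hremH σ ε n j S) := by
  intro n
  induction n with
  | zero => intro j S; exact h 0 j S
  | succ n ih =>
    intro j S
    exact (((ih (2 * j) (blkL S)).add (ih (2 * j + 1) (blkR S))).add
      ((h (n + 1) j S).const_mul _))

lemma hremH_abs_le {X : Type} [MeasurableSpace X] (σ : ℝ)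
    (ε : ∀ l : ℕ, ℕ → Cfg l → X → ℝ) (F : X → ℝ) (hF : ∀ x, 0 ≤ F x)
    (hε : ∀ l j c x, |ε l j c x| ≤ F x) :
    ∀ n : ℕ, ∃ C : ℝ, 0 ≤ C ∧ ∀ j S x, |hremH σ ε n j S x| ≤ C * F x := by
  intro n
  induction n with
  | zero => exact ⟨1, zero_le_one, fun j S x => by simp only [hremH, one_mul]; exact hε 0 j S x⟩
  | succ n ih =>
    obtain ⟨C, hC0, hC⟩ := ih
    refine ⟨2 * C + (2 : ℝ) ^ (((n : ℝ) + 1) * (1 - σ) / 2), by positivity, ?_⟩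
    intro j S x
    have h1 := hC (2 * j) (blkL S) x
    have h2 := hC (2 * j + 1) (blkR S) x
    have h3 := hε (n + 1) j S x
    have hp : (0 : ℝ) < (2 : ℝ) ^ (((n : ℝ) + 1) * (1 - σ) / 2) := by positivity
    calc |hremH σ ε (n + 1) j S x|
        ≤ |hremH σ ε n (2 * j) (blkL S) x| + |hremH σ ε n (2 * j + 1) (blkR S) x|
          + |(2 : ℝ) ^ (((n : ℝ) + 1) * (1 - σ) / 2) * ε (n + 1) j S x| := by
          simp only [hremH]
          exact (abs_add_le _ _).trans (by gcongr; exact abs_add_le _ _)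
      _ ≤ C * F x + C * F x + (2 : ℝ) ^ (((n : ℝ) + 1) * (1 - σ) / 2) * F x := by
          have h4 : |(2 : ℝ) ^ (((n : ℝ) + 1) * (1 - σ) / 2) * ε (n + 1) j S x|
              ≤ (2 : ℝ) ^ (((n : ℝ) + 1) * (1 - σ) / 2) * F x := by
            rw [abs_mul, abs_of_pos hp]
            exact mul_le_mul_of_nonneg_left (hε _ _ _ _) hp.le
          exact add_le_add (add_le_add h1 h2) h4
      _ = (2 * C + (2 : ℝ) ^ (((n : ℝ) + 1) * (1 - σ) / 2)) * F x := by ring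

lemma abs_log_sum_exp {γ : Type} [Fintype γ] [Nonempty γ] (h : γ → ℝ) :
    |Real.log (∑ S : γ, Real.exp (h S))| ≤ Real.log (Fintype.card γ) + ∑ S : γ, |h S| := by
  have hcard : (1 : ℝ) ≤ (Fintype.card γ : ℝ) := by
    exact_mod_cast Fintype.card_pos
  have hlogc : (0 : ℝ) ≤ Real.log (Fintype.card γ) := Real.log_nonneg hcard
  have habs : (0 : ℝ) ≤ ∑ S : γ, |h S| := Finset.sum_nonneg fun _ _ => abs_nonneg _
  have hpos : (0 : ℝ) < ∑ S : γ, Real.exp (h S) :=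
    Finset.sum_pos (fun _ _ => Real.exp_pos _) Finset.univ_nonempty
  rw [abs_le]
  constructor
  · obtain ⟨S₀⟩ := (inferInstance : Nonempty γ)
    have h1 : Real.exp (h S₀) ≤ ∑ S : γ, Real.exp (h S) :=
      Finset.single_le_sum (fun _ _ => (Real.exp_pos _).le) (Finset.mem_univ _)
    have h2 : h S₀ ≤ Real.log (∑ S : γ, Real.exp (h S)) := by
      rw [← Real.log_exp (h S₀)]
      exact Real.log_le_log (Real.exp_pos _) h1
    have h3 : -(∑ S : γ, |h S|) ≤ h S₀ := by
      have : |h S₀| ≤ ∑ S : γ, |h S| :=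
        Finset.single_le_sum (f := fun S => |h S|) (fun _ _ => abs_nonneg _) (Finset.mem_univ _)
      linarith [neg_abs_le (h S₀)]
    linarith
  · have h1 : ∀ S : γ, Real.exp (h S) ≤ Real.exp (∑ T : γ, |h T|) := by
      intro S
      apply Real.exp_le_exp.2
      calc h S ≤ |h S| := le_abs_self _
        _ ≤ ∑ T : γ, |h T| :=
          Finset.single_le_sum (f := fun T => |h T|) (fun _ _ => abs_nonneg _) (Finset.mem_univ _)
    have h2 : ∑ S : γ, Real.exp (h S) ≤ (Fintype.card γ : ℝ) * Real.exp (∑ T : γ, |h T|) := by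
      calc ∑ S : γ, Real.exp (h S) ≤ ∑ _S : γ, Real.exp (∑ T : γ, |h T|) :=
            Finset.sum_le_sum fun S _ => h1 S
        _ = (Fintype.card γ : ℝ) * Real.exp (∑ T : γ, |h T|) := by
            simp [Finset.sum_const, nsmul_eq_mul]
    calc Real.log (∑ S : γ, Real.exp (h S))
        ≤ Real.log ((Fintype.card γ : ℝ) * Real.exp (∑ T : γ, |h T|)) :=
          Real.log_le_log hpos h2
      _ = Real.log (Fintype.card γ) + ∑ T : γ, |h T| := by
          rw [Real.log_mul (by positivity) (Real.exp_ne_zero _), Real.log_exp]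

/-- The configurations on `2^(n+1)` spins split into two halves. -/
def cfgEquiv (n : ℕ) : Cfg (n + 1) ≃ Cfg n × Cfg n where
  toFun S := (blkL S, blkR S)
  invFun p i := if h : (i : ℕ) < 2 ^ n then p.1 ⟨i, h⟩
    else p.2 ⟨(i : ℕ) - 2 ^ n, by
      have h2 : (i : ℕ) < 2 ^ (n + 1) := i.2
      have h3 : (2 : ℕ) ^ (n + 1) = 2 ^ n * 2 := pow_succ 2 n
      omega⟩
  left_inv S := by
    funext i
    by_cases h : (i : ℕ) < 2 ^ n
    · simp only [dif_pos h, blkL]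
    · simp only [dif_neg h, blkR]
      congr 1
      apply Fin.ext
      simp only []
      have := i.2
      omega
  right_inv p := by
    refine Prod.ext ?_ ?_
    · funext j
      simp only [blkL]
      rw [dif_pos (show (j : ℕ) < 2 ^ n from j.2)]
    · funext j
      simp only [blkR]
      rw [dif_neg (by omega)]
      exact congrArg p.2 (Fin.ext (by simp))

lemma sum_cfg_split {n : ℕ} (f g : Cfg n → ℝ) :
    ∑ S : Cfg (n + 1), f (blkL S) * g (blkR S) = (∑ T : Cfg n, f T) * ∑ T : Cfg n, g T := by
  calc ∑ S : Cfg (n + 1), f (blkL S) * g (blkR S)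
      = ∑ p : Cfg n × Cfg n, f p.1 * g p.2 := Fintype.sum_equiv (cfgEquiv n) _ _ fun S => rfl
    _ = (∑ T : Cfg n, f T) * ∑ T : Cfg n, g T := by
        rw [Finset.sum_mul_sum, Fintype.sum_prod_type]


lemma integrable_id_gaussianReal : Integrable (fun x : ℝ => x) (gaussianReal 0 1) := by
  rw [gaussianReal_of_var_ne_zero 0 one_ne_zero]
  rw [integrable_withDensity_iff (measurable_gaussianPDF 0 1)
    (ae_of_all _ fun x => ENNReal.ofReal_lt_top)]
  have : (fun x : ℝ => x * ((gaussianPDF 0 1 x).toReal))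
      = fun x : ℝ => (Real.sqrt (2 * Real.pi))⁻¹ * (x * Real.exp (-(2⁻¹) * x ^ 2)) := by
    funext x
    rw [gaussianPDF, ENNReal.toReal_ofReal (gaussianPDFReal_nonneg _ _ _), gaussianPDFReal]
    push_cast
    ring_nf
  rw [this]
  exact (integrable_mul_exp_neg_mul_sq (by norm_num : (0:ℝ) < 2⁻¹)).const_mul _

lemma gauss_map_eval_pi {ι : Type} [Fintype ι] [DecidableEq ι] (ν : Measure ℝ) [IsProbabilityMeasure ν] (i : ι) :
    (Measure.pi fun _ : ι => ν).map (fun x => x i) = ν := by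
  ext s hs
  rw [Measure.map_apply (measurable_pi_apply i) hs]
  have hpre : (fun x : ι → ℝ => x i) ⁻¹' s
      = Set.pi Set.univ (fun j => if j = i then s else Set.univ) := by
    ext x
    simp only [Set.mem_preimage, Set.mem_pi, Set.mem_univ, true_implies]
    constructor
    · intro hx j
      by_cases hj : j = i
      · subst hj; simpa using hx
      · simp [hj]
    · intro hx
      have := hx i
      simpa using this
  rw [hpre, Measure.pi_pi]
  rw [Finset.prod_eq_single i (fun j _ hj => by simp [hj]) (by simp)]
  simp

/-- Coordinatewise application of law-preserving maps preserves a product of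
standard Gaussians. -/
lemma pi_map_coord {ι : Type} [Fintype ι] (f : ι → ℝ → ℝ) (hf : ∀ i, Measurable (f i))
    (hlaw : ∀ i, (gaussianReal 0 1).map (f i) = gaussianReal 0 1) :
    (Measure.pi fun _ : ι => gaussianReal 0 1).map (fun x i => f i (x i))
      = Measure.pi fun _ : ι => gaussianReal 0 1 := by
  refine (Measure.pi_eq (μ := fun _ : ι => gaussianReal 0 1) (fun s hs => ?_)).symm
  have hm : Measurable (fun x : ι → ℝ => fun i => f i (x i)) :=
    measurable_pi_lambda _ fun i => (hf i).comp (measurable_pi_apply i)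
  rw [Measure.map_apply hm (MeasurableSet.univ_pi hs)]
  have hpre : (fun x : ι → ℝ => fun i => f i (x i)) ⁻¹' Set.pi Set.univ s
      = Set.pi Set.univ (fun i => f i ⁻¹' s i) := by
    ext x
    simp [Set.mem_pi]
  rw [hpre, Measure.pi_pi]
  refine Finset.prod_congr rfl fun i _ => ?_
  rw [← Measure.map_apply (hf i) (hs i), hlaw i]

/-- Permuting the coordinates preserves a product of standard Gaussians. -/
lemma pi_map_perm {ι : Type} [Fintype ι] (e : ι ≃ ι) :
    (Measure.pi fun _ : ι => gaussianReal 0 1).map (fun x i => x (e i))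
      = Measure.pi fun _ : ι => gaussianReal 0 1 := by
  refine (Measure.pi_eq (μ := fun _ : ι => gaussianReal 0 1) (fun s hs => ?_)).symm
  have hm : Measurable (fun x : ι → ℝ => fun i => x (e i)) :=
    measurable_pi_lambda _ fun i => measurable_pi_apply (e i)
  rw [Measure.map_apply hm (MeasurableSet.univ_pi hs)]
  have hpre : (fun x : ι → ℝ => fun i => x (e i)) ⁻¹' Set.pi Set.univ s
      = Set.pi Set.univ (fun j => s (e.symm j)) := by
    ext x
    simp only [Set.mem_preimage, Set.mem_pi, Set.mem_univ, true_implies]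
    constructor
    · intro hx j
      have := hx (e.symm j)
      simpa using this
    · intro hx i
      have := hx (e i)
      simpa using this
  rw [hpre, Measure.pi_pi]
  exact Fintype.prod_equiv e.symm _ _ fun j => rfl

lemma neg_gaussian_law : (gaussianReal 0 1).map (fun x : ℝ => -x) = gaussianReal 0 1 := by
  have h := gaussianReal_map_const_mul (μ := 0) (v := 1) (-1)
  have h2 : (fun x : ℝ => -1 * x) = fun x : ℝ => -x := by funext x; ring
  rw [h2] at h
  rw [h]
  norm_num

lemma map_family_eq_pi {Ω : Type} [MeasurableSpace Ω] (μ : Measure Ω) [IsProbabilityMeasure μ]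
    {J : Type} [DecidableEq J] (f : J → Ω → ℝ) (hfm : ∀ q, Measurable (f q))
    (hgauss : ∀ q, μ.map (f q) = gaussianReal 0 1)
    (hindep : iIndepFun f μ)
    {ι : Type} [Fintype ι] [DecidableEq ι] (φ : ι → J) (hφ : Function.Injective φ) :
    μ.map (fun ω i => f (φ i) ω) = Measure.pi fun _ : ι => gaussianReal 0 1 := by
  classical
  refine (Measure.pi_eq (μ := fun _ : ι => gaussianReal 0 1) (fun s hs => ?_)).symm
  have hm : Measurable (fun ω => fun i : ι => f (φ i) ω) :=
    measurable_pi_lambda _ fun i => hfm (φ i)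
  rw [Measure.map_apply hm (MeasurableSet.univ_pi hs)]
  set sets : J → Set Ω := fun q =>
    if h : ∃ i, φ i = q then f q ⁻¹' s h.choose else Set.univ with hsets
  have key : ∀ i : ι, sets (φ i) = f (φ i) ⁻¹' s i := by
    intro i
    have h : ∃ i', φ i' = φ i := ⟨i, rfl⟩
    rw [hsets]
    simp only [dif_pos h]
    rw [hφ h.choose_spec]
  have hpre : (fun ω => fun i : ι => f (φ i) ω) ⁻¹' Set.pi Set.univ s
      = ⋂ q ∈ Finset.image φ Finset.univ, sets q := by
    ext ω
    simp only [Set.mem_preimage, Set.mem_pi, Set.mem_univ, true_implies, Set.mem_iInter,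
      Finset.mem_image, Finset.mem_univ, true_and]
    constructor
    · rintro hω q ⟨i, rfl⟩
      rw [key i]
      exact hω i
    · intro hω i
      have := hω (φ i) ⟨i, rfl⟩
      rwa [key i] at this
  rw [hpre]
  rw [hindep.meas_biInter (S := Finset.image φ Finset.univ) (s := sets) ?_]
  · rw [Finset.prod_image (fun i _ j _ h => hφ h)]
    refine Finset.prod_congr rfl fun i _ => ?_
    rw [key i, ← Measure.map_apply (hfm (φ i)) (hs i), hgauss (φ i)]
  · intro q hq
    obtain ⟨i, -, rfl⟩ := Finset.mem_image.mp hq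
    rw [key i]
    exact ⟨s i, hs i, rfl⟩
/-! ### Stage 4: the finite Gaussian environment of the first `k+2` levels -/

/-- Index type for the Gaussian variables feeding the first `k+2` levels of the HREM. -/
abbrev HIdx (k : ℕ) : Type :=
  Σ l : Fin (k + 2), Fin (2 ^ (k + 1 - (l : ℕ))) × Cfg (l : ℕ)

/-- The canonical family of energies on the product space `HIdx k → ℝ`. -/
noncomputable def epshat (k : ℕ) : ∀ l : ℕ, ℕ → Cfg l → (HIdx k → ℝ) → ℝ :=
  fun l j c x =>
    if h : l < k + 2 ∧ j < 2 ^ (k + 1 - l) then x ⟨⟨l, h.1⟩, ⟨j, h.2⟩, c⟩ else 0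

lemma epshat_eq {k l j : ℕ} (hl : l < k + 2) (hj : j < 2 ^ (k + 1 - l)) (c : Cfg l)
    (x : HIdx k → ℝ) : epshat k l j c x = x ⟨⟨l, hl⟩, ⟨j, hj⟩, c⟩ := by
  rw [epshat, dif_pos ⟨hl, hj⟩]

lemma epshat_measurable (k : ℕ) : ∀ l j c, Measurable (epshat k l j c) := by
  intro l j c
  unfold epshat
  split
  · exact measurable_pi_apply _
  · exact measurable_const

/-- Flip of the level-`k+1` coordinates. -/
noncomputable def hFlip (k : ℕ) : (HIdx k → ℝ) → HIdx k → ℝ :=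
  fun x i => if ((i.1 : ℕ) = k + 1) then -x i else x i

/-- Swap of the two level-`k` subtrees (levels `≤ k`: translation by `2^(k-l)` mod
`2^(k+1-l)`; level `k+1`: identity). -/
def hSwap (k : ℕ) : HIdx k → HIdx k := fun i =>
  if h : (i.1 : ℕ) ≤ k then
    ⟨i.1, ⟨(i.2.1.1 + 2 ^ (k - (i.1 : ℕ))) % 2 ^ (k + 1 - (i.1 : ℕ)),
      Nat.mod_lt _ (Nat.pow_pos (by norm_num))⟩, i.2.2⟩
  else i

lemma mod_swap_aux {h j : ℕ} (hh : 0 < h) (hj : j < 2 * h) :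
    ((j + h) % (2 * h) + h) % (2 * h) = j := by
  rcases lt_or_ge j h with hc | hc
  · have h1 : (j + h) % (2 * h) = j + h := Nat.mod_eq_of_lt (by omega)
    have e : j + h + h = j + 2 * h := by ring
    rw [h1, e, Nat.add_mod_right, Nat.mod_eq_of_lt (by omega)]
  · have h1 : (j + h) % (2 * h) = j - h := by
      rw [Nat.mod_eq_sub_mod (by omega), Nat.mod_eq_of_lt (by omega)]
      omega
    rw [h1]
    have e : j - h + h = j := by omega
    rw [e, Nat.mod_eq_of_lt (by omega)]

lemma pow_sub_succ {k l : ℕ} (hl : l ≤ k) : 2 ^ (k + 1 - l) = 2 * 2 ^ (k - l) := by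
  have h2 : k + 1 - l = (k - l) + 1 := by omega
  rw [h2, pow_succ]
  ring

lemma hSwap_eq_of_le {k : ℕ} {l : Fin (k + 2)} (h : (l : ℕ) ≤ k)
    (m : Fin (2 ^ (k + 1 - (l : ℕ)))) (cc : Cfg (l : ℕ)) :
    hSwap k ⟨l, m, cc⟩ =
      ⟨l, ⟨((m : ℕ) + 2 ^ (k - (l : ℕ))) % 2 ^ (k + 1 - (l : ℕ)),
        Nat.mod_lt _ (Nat.pow_pos (by norm_num))⟩, cc⟩ := dif_pos h

lemma hSwap_involutive (k : ℕ) : Function.Involutive (hSwap k) := by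
  rintro ⟨l, j, c⟩
  by_cases h : (l : ℕ) ≤ k
  · rw [hSwap_eq_of_le h j c, hSwap_eq_of_le h _ c]
    have harith : ((((j : ℕ) + 2 ^ (k - (l : ℕ))) % 2 ^ (k + 1 - (l : ℕ))) + 2 ^ (k - (l : ℕ)))
        % 2 ^ (k + 1 - (l : ℕ)) = (j : ℕ) := by
      have hmod : 2 ^ (k + 1 - (l : ℕ)) = 2 * 2 ^ (k - (l : ℕ)) := pow_sub_succ h
      have hj2 : (j : ℕ) < 2 * 2 ^ (k - (l : ℕ)) := by
        have := j.2
        omega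
      have hres := mod_swap_aux (Nat.pow_pos (n := k - (l : ℕ)) (by norm_num)) hj2
      rw [← hmod] at hres
      exact hres
    exact congrArg (fun m : Fin (2 ^ (k + 1 - (l : ℕ))) => (⟨l, m, c⟩ : HIdx k))
      (Fin.ext harith)
  · have e : hSwap k ⟨l, j, c⟩ = ⟨l, j, c⟩ := dif_neg h
    rw [e, e]

/-- The swap as a permutation. -/
def hSwapPerm (k : ℕ) : HIdx k ≃ HIdx k := Function.Involutive.toPerm _ (hSwap_involutive k)

/-- **Monotonicity of the HREM free energy.** For the HREM (with i.i.d. standard Gaussian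
random energies `ε`), the quenched free energy sequence is non-decreasing in system size:
`f_{k+1} ≥ f_k` for all `k ≥ 0` and all `β ≥ 0`. -/
theorem hremF_monotone
    (σ β : ℝ) (hβ : 0 ≤ β) (μ : Measure Ω) [IsProbabilityMeasure μ]
    (ε : ∀ l : ℕ, ℕ → Cfg l → Ω → ℝ)
    (hmeas : ∀ l j c, Measurable (ε l j c))
    (hgauss : ∀ l j c, μ.map (ε l j c) = gaussianReal 0 1)
    (hindep : iIndepFun
      (fun q : Σ l : ℕ, ℕ × Cfg l => ε q.1 q.2.1 q.2.2) μ) :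
    ∀ k : ℕ, hremF σ ε μ β k ≤ hremF σ ε μ β (k + 1) := by
  classical
  intro k
  set pp : Measure (HIdx k → ℝ) := Measure.pi fun _ : HIdx k => gaussianReal 0 1 with hpp
  haveI : IsProbabilityMeasure pp := by rw [hpp]; infer_instance
  set V : Ω → HIdx k → ℝ := fun ω i => ε (i.1 : ℕ) (i.2.1 : ℕ) i.2.2 ω with hV
  have hVmeas : Measurable V := measurable_pi_lambda _ fun i => hmeas _ _ _
  -- the joint law of the relevant energies is the standard Gaussian product measure
  have hmapV : μ.map V = pp := by
    rw [hpp]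
    have hinj : Function.Injective
        (fun i : HIdx k => (⟨(i.1 : ℕ), ((i.2.1 : ℕ), i.2.2)⟩ : Σ l : ℕ, ℕ × Cfg l)) := by
      rintro ⟨l₁, j₁, c₁⟩ ⟨l₂, j₂, c₂⟩ h
      obtain ⟨h1, h2⟩ := Sigma.mk.inj_iff.mp h
      have hl : l₁ = l₂ := Fin.ext h1
      subst hl
      obtain ⟨hj, hc⟩ := Prod.mk_inj.mp (eq_of_heq h2)
      have hj' : j₁ = j₂ := Fin.ext hj
      subst hj'
      subst hc
      rfl
    exact map_family_eq_pi μ (fun q : Σ l : ℕ, ℕ × Cfg l => ε q.1 q.2.1 q.2.2)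
      (fun q => hmeas _ _ _) (fun q => hgauss _ _ _) hindep _ hinj
  -- transfer of the random environment
  have hcond : ∀ l, l ≤ k + 1 → ∀ j', j' < 2 ^ (k + 1 - l) → ∀ (c : Cfg l) (ω : Ω),
      ε l j' c ω = epshat k l j' c (V ω) := by
    intro l hl j' hj' c ω
    rw [epshat_eq (by omega) hj' c]
  have hZ1trans : ∀ ω, hremZ σ ε β (k + 1) ω = hremZ σ (epshat k) β (k + 1) (V ω) := by
    intro ω
    unfold hremZ
    refine Finset.sum_congr rfl fun S _ => ?_
    rw [hremH_congr σ ε (epshat k) (k + 1) 0 0 ω (V ω)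
      (fun l hl j' hj' c => by
        simp only [zero_mul, zero_add]
        exact hcond l hl j' hj' c ω) S]
  have hZktrans : ∀ ω, hremZ σ ε β k ω = hremZ σ (epshat k) β k (V ω) := by
    intro ω
    unfold hremZ
    refine Finset.sum_congr rfl fun S _ => ?_
    rw [hremH_congr σ ε (epshat k) k 0 0 ω (V ω)
      (fun l hl j' hj' c => by
        simp only [zero_mul, zero_add]
        have hle : 2 ^ (k - l) ≤ 2 ^ (k + 1 - l) :=
          Nat.pow_le_pow_right (by norm_num) (by omega)
        exact hcond l (by omega) j' (by omega) c ω) S]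
  -- the three free-energy functionals on the product space
  set G : (HIdx k → ℝ) → ℝ := fun x => Real.log (hremZ σ (epshat k) β (k + 1) x) with hGdef
  set G1 : (HIdx k → ℝ) → ℝ := fun x => Real.log (hremZ σ (epshat k) β k x) with hG1def
  set G2 : (HIdx k → ℝ) → ℝ :=
    fun x => Real.log (∑ T : Cfg k, Real.exp (-β * hremH σ (epshat k) k 1 T x)) with hG2def
  have hHm := hremH_measurable σ (epshat k) (epshat_measurable k)
  have hZm : ∀ n j : ℕ, Measurable
      (fun x : HIdx k → ℝ => ∑ T : Cfg n, Real.exp (-β * hremH σ (epshat k) n j T x)) :=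
    fun n j => Finset.measurable_sum _ fun T _ => ((hHm n j T).const_mul (-β)).exp
  have hGmeas : Measurable G := Measurable.log (hZm (k + 1) 0)
  have hG1meas : Measurable G1 := Measurable.log (hZm k 0)
  have hG2meas : Measurable G2 := Measurable.log (hZm k 1)
  have hZpos : ∀ (n j : ℕ) (x : HIdx k → ℝ),
      0 < ∑ T : Cfg n, Real.exp (-β * hremH σ (epshat k) n j T x) :=
    fun n j x => Finset.sum_pos (fun _ _ => Real.exp_pos _) Finset.univ_nonempty
  -- integrable bounds
  set F : (HIdx k → ℝ) → ℝ := fun x => ∑ i : HIdx k, |x i| with hFdef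
  have hFnn : ∀ x, 0 ≤ F x := fun x => Finset.sum_nonneg fun _ _ => abs_nonneg _
  have hFint : Integrable F pp := by
    refine integrable_finset_sum _ fun i _ => ?_
    have h1 : Integrable (fun r : ℝ => |r|) (pp.map fun x => x i) := by
      rw [hpp, gauss_map_eval_pi]
      exact integrable_id_gaussianReal.abs
    exact (integrable_map_measure continuous_abs.measurable.aestronglyMeasurable
      (measurable_pi_apply i).aemeasurable).mp h1
  have hEb : ∀ (l j : ℕ) (c : Cfg l) (x : HIdx k → ℝ), |epshat k l j c x| ≤ F x := by
    intro l j c x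
    unfold epshat
    split
    · exact Finset.single_le_sum (f := fun i : HIdx k => |x i|)
        (fun _ _ => abs_nonneg _) (Finset.mem_univ _)
    · simpa using hFnn x
  obtain ⟨C, hC0, hC⟩ := hremH_abs_le σ (epshat k) F hFnn hEb (k + 1)
  obtain ⟨C', hC0', hC'⟩ := hremH_abs_le σ (epshat k) F hFnn hEb k
  have hint : ∀ (n j : ℕ) (D : ℝ), 0 ≤ D →
      (∀ (j' : ℕ) (S : Cfg n) (x : HIdx k → ℝ), |hremH σ (epshat k) n j' S x| ≤ D * F x) →
      Integrable (fun x : HIdx k → ℝ =>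
        Real.log (∑ T : Cfg n, Real.exp (-β * hremH σ (epshat k) n j T x))) pp := by
    intro n j D hD hDb
    refine Integrable.mono'
      (g := fun x => Real.log (Fintype.card (Cfg n))
        + (Fintype.card (Cfg n) : ℝ) * (β * D) * F x) ?_ ?_ ?_
    · exact (integrable_const _).add (hFint.const_mul _)
    · exact (Measurable.log (hZm n j)).aestronglyMeasurable
    · refine ae_of_all _ fun x => ?_
      have h1 := abs_log_sum_exp (fun T : Cfg n => -β * hremH σ (epshat k) n j T x)
      have h2 : ∑ T : Cfg n, |-β * hremH σ (epshat k) n j T x|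
          ≤ (Fintype.card (Cfg n) : ℝ) * (β * D) * F x := by
        calc ∑ T : Cfg n, |-β * hremH σ (epshat k) n j T x|
            ≤ ∑ _T : Cfg n, β * (D * F x) := by
              refine Finset.sum_le_sum fun T _ => ?_
              rw [abs_mul, abs_neg, abs_of_nonneg hβ]
              exact mul_le_mul_of_nonneg_left (hDb j T x) hβ
          _ = (Fintype.card (Cfg n) : ℝ) * (β * D) * F x := by
              rw [Finset.sum_const, nsmul_eq_mul]
              simp [Finset.card_univ]
              ring
      rw [Real.norm_eq_abs]
      beta_reduce
      linarith
  have hGint : Integrable G pp := hint (k + 1) 0 C hC0 hC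
  have hG1int : Integrable G1 pp := hint k 0 C' hC0' hC'
  have hG2int : Integrable G2 pp := hint k 1 C' hC0' hC'
  -- the level-(k+1) sign flip
  set Nf : (HIdx k → ℝ) → HIdx k → ℝ := hFlip k with hNf
  have hNmeas : Measurable Nf := by
    refine measurable_pi_lambda _ fun i => ?_
    unfold Nf
    unfold hFlip
    by_cases h : ((i.1 : ℕ) = k + 1)
    · simp only [if_pos h]
      exact (measurable_pi_apply i).neg
    · simp only [if_neg h]
      exact measurable_pi_apply i
  have hNlaw : pp.map Nf = pp := by
    rw [hpp]
    refine pi_map_coord (ι := HIdx k)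
      (fun i t => if ((i.1 : ℕ) = k + 1) then -t else t) (fun i => ?_) (fun i => ?_)
    · by_cases h : ((i.1 : ℕ) = k + 1)
      · simp only [if_pos h]; exact measurable_neg
      · simp only [if_neg h]; exact measurable_id
    · by_cases h : ((i.1 : ℕ) = k + 1)
      · simp only [if_pos h]; exact neg_gaussian_law
      · simp only [if_neg h]; exact Measure.map_id
  -- the subtree swap
  have hPm : Measurable (fun x : HIdx k → ℝ => fun i => x (hSwap k i)) :=
    measurable_pi_lambda _ fun i => measurable_pi_apply _
  have hPlaw : pp.map (fun x : HIdx k → ℝ => fun i => x (hSwap k i)) = pp := by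
    rw [hpp]
    exact pi_map_perm (hSwapPerm k)
  -- environment identities
  have hflip_low : ∀ (l m : ℕ), l ≤ k → ∀ hm : m < 2 ^ (k + 1 - l), ∀ (c : Cfg l)
      (x : HIdx k → ℝ), epshat k l m c (Nf x) = epshat k l m c x := by
    intro l m hl hm c x
    rw [epshat_eq (by omega) hm, epshat_eq (by omega) hm]
    unfold Nf
    unfold hFlip
    rw [if_neg (show ¬(l = k + 1) by omega)]
  have hflip_top : ∀ (S : Cfg (k + 1)) (x : HIdx k → ℝ),
      epshat k (k + 1) 0 S (Nf x) = -epshat k (k + 1) 0 S x := by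
    intro S x
    have h0 : 0 < 2 ^ (k + 1 - (k + 1)) := Nat.pow_pos (by norm_num)
    rw [epshat_eq (by omega) h0, epshat_eq (by omega) h0]
    unfold Nf
    unfold hFlip
    rw [if_pos (show k + 1 = k + 1 from rfl)]
  have hH_flip : ∀ j : ℕ, j ≤ 1 → ∀ (T : Cfg k) (x : HIdx k → ℝ),
      hremH σ (epshat k) k j T (Nf x) = hremH σ (epshat k) k j T x := by
    intro j hj T x
    refine hremH_congr σ (epshat k) (epshat k) k j j (Nf x) x ?_ T
    intro l hl j' hj' c
    have hmod : 2 ^ (k + 1 - l) = 2 * 2 ^ (k - l) := pow_sub_succ hl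
    have hlt : j * 2 ^ (k - l) + j' < 2 ^ (k + 1 - l) := by
      interval_cases j <;> omega
    exact hflip_low l _ hl hlt c x
  have hH_swap : ∀ (T : Cfg k) (x : HIdx k → ℝ),
      hremH σ (epshat k) k 0 T (fun i => x (hSwap k i)) = hremH σ (epshat k) k 1 T x := by
    intro T x
    refine hremH_congr σ (epshat k) (epshat k) k 0 1 _ x ?_ T
    intro l hl j' hj' c
    have hmod : 2 ^ (k + 1 - l) = 2 * 2 ^ (k - l) := pow_sub_succ hl
    have hlt0 : 0 * 2 ^ (k - l) + j' < 2 ^ (k + 1 - l) := by omega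
    have hlt1 : 1 * 2 ^ (k - l) + j' < 2 ^ (k + 1 - l) := by omega
    rw [epshat_eq (by omega) hlt0, epshat_eq (by omega) hlt1]
    rw [hSwap_eq_of_le (k := k) (l := ⟨l, by omega⟩) hl _ c]
    refine congrArg x ?_
    refine congrArg (fun m : Fin (2 ^ (k + 1 - l)) =>
      (⟨⟨l, by omega⟩, m, c⟩ : HIdx k)) (Fin.ext ?_)
    show ((0 * 2 ^ (k - l) + j') + 2 ^ (k - l)) % 2 ^ (k + 1 - l) = 1 * 2 ^ (k - l) + j'
    rw [Nat.mod_eq_of_lt (by omega)]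
    omega
  -- splitting of the level-(k+1) Hamiltonian
  have hHsplit : ∀ (S : Cfg (k + 1)) (x : HIdx k → ℝ),
      hremH σ (epshat k) (k + 1) 0 S x
        = hremH σ (epshat k) k 0 (blkL S) x + hremH σ (epshat k) k 1 (blkR S) x
          + (2 : ℝ) ^ (((k : ℝ) + 1) * (1 - σ) / 2) * epshat k (k + 1) 0 S x := by
    intro S x
    simp [hremH]
  -- the pointwise Cauchy–Schwarz inequality
  have hpoint : ∀ x : HIdx k → ℝ, G1 x + G2 x ≤ (G x + G (Nf x)) / 2 := by
    intro x
    set c2 : ℝ := (2 : ℝ) ^ (((k : ℝ) + 1) * (1 - σ) / 2) with hc2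
    set A : Cfg (k + 1) → ℝ := fun S =>
      hremH σ (epshat k) k 0 (blkL S) x + hremH σ (epshat k) k 1 (blkR S) x with hA
    have hZx : hremZ σ (epshat k) β (k + 1) x
        = ∑ S : Cfg (k + 1), Real.exp (-β * A S)
            * Real.exp (-β * (c2 * epshat k (k + 1) 0 S x)) := by
      unfold hremZ
      refine Finset.sum_congr rfl fun S _ => ?_
      rw [hHsplit S x, ← Real.exp_add]
      congr 1
      rw [hA]
      ring
    have hZNx : hremZ σ (epshat k) β (k + 1) (Nf x)
        = ∑ S : Cfg (k + 1), Real.exp (-β * A S)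
            * Real.exp (β * (c2 * epshat k (k + 1) 0 S x)) := by
      unfold hremZ
      refine Finset.sum_congr rfl fun S _ => ?_
      rw [hHsplit S (Nf x), hH_flip 0 (by norm_num) (blkL S) x,
        hH_flip 1 (by norm_num) (blkR S) x, hflip_top S x, ← Real.exp_add]
      congr 1
      rw [hA]
      ring
    have hWfact : ∑ S : Cfg (k + 1), Real.exp (-β * A S)
        = (hremZ σ (epshat k) β k x)
          * ∑ T : Cfg k, Real.exp (-β * hremH σ (epshat k) k 1 T x) := by
      calc ∑ S : Cfg (k + 1), Real.exp (-β * A S)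
          = ∑ S : Cfg (k + 1), (fun T => Real.exp (-β * hremH σ (epshat k) k 0 T x)) (blkL S)
            * (fun T => Real.exp (-β * hremH σ (epshat k) k 1 T x)) (blkR S) := by
            refine Finset.sum_congr rfl fun S _ => ?_
            rw [← Real.exp_add]
            congr 1
            rw [hA]
            ring
        _ = (∑ T : Cfg k, Real.exp (-β * hremH σ (epshat k) k 0 T x))
            * ∑ T : Cfg k, Real.exp (-β * hremH σ (epshat k) k 1 T x) := sum_cfg_split (n := k)
              (fun T => Real.exp (-β * hremH σ (epshat k) k 0 T x))
              (fun T => Real.exp (-β * hremH σ (epshat k) k 1 T x))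
        _ = (hremZ σ (epshat k) β k x)
            * ∑ T : Cfg k, Real.exp (-β * hremH σ (epshat k) k 1 T x) := rfl
    have hWpos : 0 < ∑ S : Cfg (k + 1), Real.exp (-β * A S) :=
      Finset.sum_pos (fun _ _ => Real.exp_pos _) Finset.univ_nonempty
    have hZxpos : 0 < hremZ σ (epshat k) β (k + 1) x := hZpos (k + 1) 0 x
    have hZNpos : 0 < hremZ σ (epshat k) β (k + 1) (Nf x) := hZpos (k + 1) 0 (Nf x)
    have hCS : (∑ S : Cfg (k + 1), Real.exp (-β * A S)) ^ 2
        ≤ hremZ σ (epshat k) β (k + 1) x * hremZ σ (epshat k) β (k + 1) (Nf x) := by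
      rw [hZx, hZNx]
      refine Finset.sum_sq_le_sum_mul_sum_of_sq_eq_mul Finset.univ
        (fun _ _ => by positivity) (fun _ _ => by positivity) (fun S _ => ?_)
      rw [sq, ← Real.exp_add, ← Real.exp_add, ← Real.exp_add, ← Real.exp_add,
        Real.exp_eq_exp]
      ring
    have hlog : 2 * Real.log (∑ S : Cfg (k + 1), Real.exp (-β * A S))
        ≤ G x + G (Nf x) := by
      have h1 := Real.log_le_log (by positivity) hCS
      rw [Real.log_pow, Real.log_mul hZxpos.ne' hZNpos.ne'] at h1
      simp only [hGdef]
      push_cast at h1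
      linarith
    have hGW : Real.log (∑ S : Cfg (k + 1), Real.exp (-β * A S)) = G1 x + G2 x := by
      have hne1 : hremZ σ (epshat k) β k x ≠ 0 := (hZpos k 0 x).ne'
      have hne2 : (∑ T : Cfg k, Real.exp (-β * hremH σ (epshat k) k 1 T x)) ≠ 0 :=
        (hZpos k 1 x).ne'
      rw [hWfact, Real.log_mul hne1 hne2]
    linarith
  -- integrability of the flipped functional
  have hGNint : Integrable (fun x => G (Nf x)) pp := by
    have h1 : Integrable G (pp.map Nf) := by rw [hNlaw]; exact hGint
    exact (integrable_map_measure hGmeas.aestronglyMeasurable hNmeas.aemeasurable).mp h1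
  -- transfer of the integrals
  have hIk : ∫ ω, Real.log (hremZ σ ε β k ω) ∂μ = ∫ x, G1 x ∂pp := by
    have he : (fun ω => Real.log (hremZ σ ε β k ω)) = fun ω => G1 (V ω) :=
      funext fun ω => by rw [hG1def]; rw [hZktrans ω]
    rw [he, ← hmapV]
    exact (integral_map hVmeas.aemeasurable hG1meas.aestronglyMeasurable).symm
  have hIk1 : ∫ ω, Real.log (hremZ σ ε β (k + 1) ω) ∂μ = ∫ x, G x ∂pp := by
    have he : (fun ω => Real.log (hremZ σ ε β (k + 1) ω)) = fun ω => G (V ω) :=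
      funext fun ω => by rw [hGdef]; rw [hZ1trans ω]
    rw [he, ← hmapV]
    exact (integral_map hVmeas.aemeasurable hGmeas.aestronglyMeasurable).symm
  have hswapint : ∫ x, G2 x ∂pp = ∫ x, G1 x ∂pp := by
    have he : (fun x : HIdx k → ℝ => G2 x) = fun x => G1 (fun i => x (hSwap k i)) := by
      funext x
      rw [hG1def, hG2def]
      unfold hremZ
      exact congrArg Real.log
        (Finset.sum_congr rfl fun T _ => by rw [hH_swap T x]).symm
    rw [he]
    calc ∫ x, G1 (fun i => x (hSwap k i)) ∂pp
        = ∫ y, G1 y ∂(pp.map fun x : HIdx k → ℝ => fun i => x (hSwap k i)) :=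
          (integral_map hPm.aemeasurable hG1meas.aestronglyMeasurable).symm
      _ = ∫ y, G1 y ∂pp := by rw [hPlaw]
  have hflipint : ∫ x, G (Nf x) ∂pp = ∫ x, G x ∂pp := by
    calc ∫ x, G (Nf x) ∂pp
        = ∫ y, G y ∂(pp.map Nf) :=
          (integral_map hNmeas.aemeasurable hGmeas.aestronglyMeasurable).symm
      _ = ∫ y, G y ∂pp := by rw [hNlaw]
  -- main inequality between the integrals
  have hmain : 2 * ∫ ω, Real.log (hremZ σ ε β k ω) ∂μ
      ≤ ∫ ω, Real.log (hremZ σ ε β (k + 1) ω) ∂μ := by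
    rw [hIk, hIk1]
    have h1 : ∫ x, G1 x ∂pp + ∫ x, G2 x ∂pp = ∫ x, (G1 x + G2 x) ∂pp :=
      (integral_add hG1int hG2int).symm
    have h2 : ∫ x, (G1 x + G2 x) ∂pp ≤ ∫ x, (G x + G (Nf x)) / 2 ∂pp :=
      integral_mono (hG1int.add hG2int) ((hGint.add hGNint).div_const 2) hpoint
    have h3 : ∫ x, (G x + G (Nf x)) / 2 ∂pp
        = (∫ x, G x ∂pp + ∫ x, (fun y => G (Nf y)) x ∂pp) / 2 := by
      rw [integral_div, integral_add hGint hGNint]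
    have h4 : ∫ x, (fun y => G (Nf y)) x ∂pp = ∫ x, G x ∂pp := hflipint
    linarith [hswapint]
  -- conclusion
  unfold hremF
  have hpos : (0 : ℝ) ≤ ((2 : ℝ) ^ (k + 1))⁻¹ := by positivity
  have e : ((2 : ℝ) ^ (k + 1))⁻¹ * (2 * ∫ ω, Real.log (hremZ σ ε β k ω) ∂μ)
      = ((2 : ℝ) ^ k)⁻¹ * ∫ ω, Real.log (hremZ σ ε β k ω) ∂μ := by
    rw [pow_succ]
    have h2k : ((2 : ℝ) ^ k) ≠ 0 := by positivity
    field_simp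
  have := mul_le_mul_of_nonneg_left hmain hpos
  rw [e] at this
  exact this
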